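/- For every real c > 0 and every integer n ≥ 2, the family of all n-vertex c-sparse simple graphs admits an adjacency labeling scheme with label size at most √(2·c·n·log₂ n) + 2·log₂ n + 1 bits. -/

import Mathlib

/-- fixed-width binary encoding of a natural number (little-endian). -/
def bitsOfNat : ℕ → ℕ → List Bool
  | 0, _ => []
  | w+1, N => (N % 2 == 1) :: bitsOfNat w (N / 2)

/-- decode a binary list (little-endian). -/
def natOfBits : List Bool → ℕ
  | [] => 0
  | b :: l => (cond b 1 0) + 2 * natOfBits l

@[simp] lemma length_bitsOfNat (w N : ℕ) : (bitsOfNat w N).length = w := by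
  induction w generalizing N with
  | zero => rfl
  | succ w ih => simp [bitsOfNat, ih]

lemma natOfBits_bitsOfNat (w N : ℕ) (h : N < 2 ^ w) :
    natOfBits (bitsOfNat w N) = N := by
  induction w generalizing N with
  | zero => simp [bitsOfNat, natOfBits]; omega
  | succ w ih =>
    have h2 : N / 2 < 2 ^ w := by
      rw [pow_succ] at h; omega
    have := ih (N / 2) h2
    rcases Nat.mod_two_eq_zero_or_one N with h0 | h0 <;>
      simp [bitsOfNat, natOfBits, h0, this] <;> omega

/-- base-`n` digits, fixed count. -/
def digitsOf (n : ℕ) : ℕ → ℕ → List ℕ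
  | 0, _ => []
  | e+1, N => N % n :: digitsOf n e (N / n)

def encDigits (n : ℕ) (ds : List ℕ) : ℕ := ds.foldr (fun d acc => d + n * acc) 0

lemma encDigits_lt (n : ℕ) (ds : List ℕ) (h : ∀ d ∈ ds, d < n) :
    encDigits n ds < n ^ ds.length := by
  induction ds with
  | nil => simp [encDigits]
  | cons d ds ih =>
    have hd : d < n := h d (by simp)
    have ht : encDigits n ds < n ^ ds.length := ih (fun x hx => h x (by simp [hx]))
    have : d + n * encDigits n ds < n * n ^ ds.length := by
      calc d + n * encDigits n ds < n + n * encDigits n ds := by omega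
        _ = n * (encDigits n ds + 1) := by ring
        _ ≤ n * n ^ ds.length := Nat.mul_le_mul_left n (by omega)
    simpa [encDigits, List.length_cons, pow_succ, mul_comm] using this

lemma digitsOf_encDigits (n : ℕ) (hn : 0 < n) (ds : List ℕ) (h : ∀ d ∈ ds, d < n) :
    digitsOf n ds.length (encDigits n ds) = ds := by
  induction ds with
  | nil => rfl
  | cons d ds ih =>
    have hd : d < n := h d (by simp)
    have h1 : (d + n * encDigits n ds) % n = d := by
      rw [Nat.add_mul_mod_self_left, Nat.mod_eq_of_lt hd]
    have h2 : (d + n * encDigits n ds) / n = encDigits n ds := by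
      rw [Nat.add_mul_div_left _ _ hn, Nat.div_eq_of_lt hd, Nat.zero_add]
    show (encDigits n (d :: ds)) % n :: digitsOf n ds.length ((encDigits n (d :: ds)) / n) = d :: ds
    have he : encDigits n (d :: ds) = d + n * encDigits n ds := rfl
    rw [he, h1, h2, ih (fun x hx => h x (by simp [hx]))]

/-- extract the vertex id from a label. -/
def idOfAux (n k e : ℕ) (l : List Bool) : ℕ :=
  if l.headD true = true then natOfBits ((l.drop 1).take k)
  else (digitsOf n e (natOfBits (l.drop 1))).headD 0

/-- extract the neighbor list of a low-degree vertex from its label. -/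
def nbrsOfAux (n e : ℕ) (l : List Bool) : List ℕ :=
  (digitsOf n e (natOfBits (l.drop 1))).drop 1

/-- the decoder. -/
def decoder (n k e : ℕ) (a b : List Bool) : Bool :=
  if a.headD true = false then decide (idOfAux n k e b ∈ nbrsOfAux n e a)
  else if b.headD true = false then decide (idOfAux n k e a ∈ nbrsOfAux n e b)
  else if b.length < a.length then (a.drop (1+k)).getD (b.length - 1 - k) false
  else (b.drop (1+k)).getD (a.length - 1 - k) false

/-- The family `F` of simple graphs on `Fin n` admits an adjacency labeling scheme
with label size at most `s` bits. -/
def HasLabelingScheme (n : ℕ) (F : SimpleGraph (Fin n) → Prop) (s : ℝ) : Prop :=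
  ∃ D : List Bool → List Bool → Bool,
    ∀ G : SimpleGraph (Fin n), F G →
      ∃ ℓ : Fin n → List Bool,
        (∀ v : Fin n, ((ℓ v).length : ℝ) ≤ s) ∧
        ∀ u v : Fin n, u ≠ v → (D (ℓ u) (ℓ v) = true ↔ G.Adj u v)

theorem stmt4 (c : ℝ) (hc : 0 < c) (n : ℕ) (hn : 2 ≤ n) :
    HasLabelingScheme n (fun G => (G.edgeSet.ncard : ℝ) ≤ c * (n : ℝ))
      (Real.sqrt (2 * c * (n : ℝ) * Real.logb 2 (n : ℝ)) + 2 * Real.logb 2 (n : ℝ) + 1) := by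
  classical
  have hn0 : (0:ℝ) < n := by positivity
  have hn1 : (2:ℝ) ≤ (n:ℝ) := by exact_mod_cast hn
  set L : ℝ := Real.logb 2 (n : ℝ) with hLdef
  have hL1 : 1 ≤ L := by
    have := (Real.logb_le_logb (by norm_num : (1:ℝ) < 2) (by norm_num) (by positivity)).mpr hn1
    simpa [Real.logb_self_eq_one] using this
  have hL0 : 0 < L := lt_of_lt_of_le one_pos hL1
  set t : ℝ := Real.sqrt (2 * c * (n:ℝ) * L) with htdef
  have ht0 : 0 < t := Real.sqrt_pos.mpr (by positivity)
  have ht2 : t * t = 2 * c * (n:ℝ) * L := Real.mul_self_sqrt (by positivity)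
  set k : ℕ := Nat.clog 2 n with hkdef
  have hk1 : 1 ≤ k := Nat.clog_pos (by norm_num) hn
  have hn2k : n ≤ 2 ^ k := Nat.le_pow_clog (by norm_num) n
  have hkL : (k:ℝ) < L + 1 := by
    have h1 : (2:ℕ) ^ (k - 1) < n := by
      have := Nat.pow_pred_clog_lt_self (b := 2) (by norm_num) (lt_of_lt_of_le one_lt_two hn)
      simpa [hkdef, Nat.pred_eq_sub_one] using this
    have h2 : ((2:ℝ)) ^ (k - 1) < (n:ℝ) := by exact_mod_cast h1
    have h3 : Real.logb 2 ((2:ℝ) ^ (k - 1)) < L := by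
      exact Real.logb_lt_logb (by norm_num) (by positivity) h2
    rw [Real.logb_pow, Real.logb_self_eq_one (by norm_num : (1:ℝ) < 2), mul_one] at h3
    have : ((k:ℝ) - 1) < L := by
      have hc' : ((k - 1 : ℕ) : ℝ) = (k:ℝ) - 1 := by
        have : (1:ℕ) ≤ k := hk1
        push_cast [Nat.cast_sub this]
        ring
      linarith [hc' ▸ h3]
    linarith
  set F : ℕ := ⌊2 * L + t⌋₊ with hFdef
  have hF_le : (F:ℝ) ≤ 2 * L + t := Nat.floor_le (by positivity)
  have hF_gt : 2 * L + t < (F:ℝ) + 1 := Nat.lt_floor_add_one _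
  set e : ℕ := ⌊(F:ℝ) / L⌋₊ with hedef
  have hLF : L ≤ (F:ℝ) := by linarith
  have he1 : 1 ≤ e := by
    apply Nat.le_floor
    rw [le_div_iff₀ hL0]
    push_cast
    linarith
  have he_le : (e:ℝ) ≤ (F:ℝ) / L := Nat.floor_le (by positivity)
  have he_gt : (F:ℝ) / L < (e:ℝ) + 1 := Nat.lt_floor_add_one _
  have heL_le : (e:ℝ) * L ≤ (F:ℝ) := by
    calc (e:ℝ) * L ≤ ((F:ℝ) / L) * L := by
          exact mul_le_mul_of_nonneg_right he_le (le_of_lt hL0)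
      _ = (F:ℝ) := by field_simp
  have hF_lt : (F:ℝ) < ((e:ℝ) + 1) * L := by
    have := (div_lt_iff₀ hL0).mp he_gt
    linarith
  have ht_lt : t < (e:ℝ) * L := by nlinarith
  set w : ℕ := ⌈(e:ℝ) * L⌉₊ with hwdef
  have hw_leF : w ≤ F := by
    rw [hwdef]
    exact Nat.ceil_le.mpr heL_le
  have hw_le : (w:ℝ) ≤ 2 * L + t := le_trans (by exact_mod_cast hw_leF) hF_le
  have hpow : n ^ e ≤ 2 ^ w := by
    have h2L : (2:ℝ) ^ L = (n:ℝ) := Real.rpow_logb (by norm_num) (by norm_num) hn0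
    have h1 : ((n:ℝ)) ^ (e:ℕ) = (2:ℝ) ^ (L * (e:ℕ)) := by
      rw [← h2L, ← Real.rpow_natCast ((2:ℝ)^L) e, ← Real.rpow_mul (by norm_num)]
    have h2 : (2:ℝ) ^ (L * (e:ℕ)) ≤ (2:ℝ) ^ ((w:ℕ) : ℝ) := by
      apply Real.rpow_le_rpow_of_exponent_le (by norm_num)
      calc L * (e:ℕ) = (e:ℝ) * L := by ring
        _ ≤ (w:ℝ) := Nat.le_ceil _
    have h3 : ((n:ℝ)) ^ (e:ℕ) ≤ ((2:ℝ)) ^ (w:ℕ) := by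
      rw [h1]
      calc (2:ℝ) ^ (L * (e:ℕ)) ≤ (2:ℝ) ^ ((w:ℕ):ℝ) := h2
        _ = ((2:ℝ)) ^ (w:ℕ) := Real.rpow_natCast 2 w
    exact_mod_cast h3
  -- the decoder
  refine ⟨decoder n k e, ?_⟩
  intro G hG
  letI : DecidableRel G.Adj := Classical.decRel _
  set m : ℕ := G.edgeFinset.card with hmdef
  have hmG : ((m:ℝ)) ≤ c * n := by
    have : G.edgeSet.ncard = m := by
      rw [hmdef, ← Set.ncard_coe_finset, SimpleGraph.coe_edgeFinset]
    rw [← this]; exact hG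
  set H : Finset (Fin n) := Finset.univ.filter (fun v => e ≤ G.degree v) with hHdef
  have hHcard : H.card * e ≤ 2 * m := by
    calc H.card * e = ∑ _v ∈ H, e := by rw [Finset.sum_const, smul_eq_mul]
      _ ≤ ∑ v ∈ H, G.degree v :=
          Finset.sum_le_sum (fun i hi => (Finset.mem_filter.mp hi).2)
      _ ≤ ∑ v, G.degree v := Finset.sum_le_sum_of_subset (Finset.subset_univ H)
      _ = 2 * m := by rw [SimpleGraph.sum_degrees_eq_twice_card_edges]
  have hHt : (H.card : ℝ) < t := by
    have h1 : (H.card : ℝ) * e ≤ 2 * (c * n) := by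
      calc (H.card : ℝ) * e ≤ 2 * (m:ℝ) := by exact_mod_cast hHcard
        _ ≤ 2 * (c * n) := by linarith
    have he0 : (0:ℝ) < e := by exact_mod_cast he1
    nlinarith [mul_le_mul_of_nonneg_right h1 (le_of_lt hL0),
      mul_lt_mul_of_pos_right ht_lt ht0]
  set hlist : List (Fin n) := H.sort (· ≤ ·) with hlistdef
  have hlist_len : hlist.length = H.card := Finset.length_sort _
  have hlist_mem : ∀ v : Fin n, v ∈ hlist ↔ e ≤ G.degree v := by
    intro v
    rw [hlistdef, Finset.mem_sort, hHdef, Finset.mem_filter]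
    simp
  set rank : Fin n → ℕ := fun v => hlist.idxOf v with hrankdef
  have hrank_lt : ∀ v : Fin n, e ≤ G.degree v → rank v < H.card := by
    intro v hv
    rw [← hlist_len]
    exact List.idxOf_lt_length_iff.mpr ((hlist_mem v).mpr hv)
  have hrank_get : ∀ v : Fin n, (hv : e ≤ G.degree v) →
      ∀ d, hlist.getD (rank v) d = v := by
    intro v hv d
    have h1 : rank v < hlist.length := by rw [hlist_len]; exact hrank_lt v hv
    rw [List.getD_eq_getElem _ _ h1]
    exact List.getElem_idxOf h1
  have hrank_inj : ∀ u v : Fin n, e ≤ G.degree u → e ≤ G.degree v →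
      rank u = rank v → u = v := by
    intro u v hu hv hr
    have := hrank_get u hu u
    rw [hr, hrank_get v hv u] at this
    exact this.symm
  set nbrL : Fin n → List ℕ := fun v => ((G.neighborFinset v).sort (· ≤ ·)).map Fin.val
    with hnbrLdef
  have hnbrL_len : ∀ v, (nbrL v).length = G.degree v := by
    intro v
    rw [hnbrLdef]
    rw [List.length_map, Finset.length_sort, SimpleGraph.card_neighborFinset_eq_degree]
  have hnbrL_mem : ∀ u v : Fin n, (v.val ∈ nbrL u ↔ G.Adj u v) := by
    intro u v
    rw [hnbrLdef]
    simp only [List.mem_map, Finset.mem_sort, SimpleGraph.mem_neighborFinset]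
    constructor
    · rintro ⟨y, hy, hyv⟩
      have hyv' : y = v := Fin.ext hyv
      exact hyv' ▸ hy
    · intro h; exact ⟨v, h, rfl⟩
  set digs : Fin n → List ℕ := fun v =>
    v.val :: (nbrL v ++ List.replicate (e - 1 - G.degree v) v.val) with hdigsdef
  have hdigs_len : ∀ v, ¬ e ≤ G.degree v → (digs v).length = e := by
    intro v hv
    rw [hdigsdef]
    simp only [List.length_cons, List.length_append, List.length_replicate, hnbrL_len]
    omega
  have hdigs_lt : ∀ v, ∀ d ∈ digs v, d < n := by
    intro v d hd
    rw [hdigsdef] at hd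
    simp only [List.mem_cons, List.mem_append, List.mem_replicate, hnbrLdef,
      List.mem_map] at hd
    rcases hd with h | h | h
    · rw [h]; exact v.isLt
    · obtain ⟨y, _, hy⟩ := h; rw [← hy]; exact y.isLt
    · rw [h.2]; exact v.isLt
  set bm : Fin n → List Bool := fun v =>
    (List.range (rank v)).map (fun j => decide (G.Adj v (hlist.getD j v))) with hbmdef
  set ℓ : Fin n → List Bool := fun v =>
    if e ≤ G.degree v then true :: (bitsOfNat k v.val ++ bm v)
    else false :: bitsOfNat w (encDigits n (digs v)) with hldef
  have hlen_high : ∀ v, e ≤ G.degree v → (ℓ v).length = 1 + (k + rank v) := by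
    intro v hv
    rw [hldef]
    simp [hv, hbmdef]
    omega
  have hlen_low : ∀ v, ¬ e ≤ G.degree v → (ℓ v).length = 1 + w := by
    intro v hv
    rw [hldef]
    simp [hv]
    omega
  -- decoding facts
  have hdec_digits : ∀ v, ¬ e ≤ G.degree v →
      digitsOf n e (natOfBits ((ℓ v).drop 1)) = digs v := by
    intro v hv
    have h1 : (ℓ v).drop 1 = bitsOfNat w (encDigits n (digs v)) := by
      rw [hldef]; simp [hv]
    have henc : encDigits n (digs v) < 2 ^ w := by
      calc encDigits n (digs v) < n ^ (digs v).length :=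
            encDigits_lt n (digs v) (hdigs_lt v)
        _ = n ^ e := by rw [hdigs_len v hv]
        _ ≤ 2 ^ w := hpow
    rw [h1, natOfBits_bitsOfNat w _ henc, ← hdigs_len v hv,
      digitsOf_encDigits n (by omega) (digs v) (hdigs_lt v)]
  have hid : ∀ v : Fin n, idOfAux n k e (ℓ v) = v.val := by
    intro v
    by_cases hv : e ≤ G.degree v
    · have h1 : (ℓ v).headD true = true := by rw [hldef]; simp [hv]
      rw [idOfAux, if_pos h1]
      have h2 : (ℓ v).drop 1 = bitsOfNat k v.val ++ bm v := by rw [hldef]; simp [hv]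
      rw [h2]
      have h3 : (bitsOfNat k v.val ++ bm v).take k = bitsOfNat k v.val :=
        List.take_left' (length_bitsOfNat k v.val)
      rw [h3, natOfBits_bitsOfNat k v.val (lt_of_lt_of_le v.isLt hn2k)]
    · have h1 : (ℓ v).headD true = false := by rw [hldef]; simp [hv]
      rw [idOfAux, if_neg (by rw [h1]; simp), hdec_digits v hv, hdigsdef]
      simp
  have hmem : ∀ u v : Fin n, u ≠ v → ¬ e ≤ G.degree u →
      (v.val ∈ nbrsOfAux n e (ℓ u) ↔ G.Adj u v) := by
    intro u v huv hu
    rw [nbrsOfAux, hdec_digits u hu, hdigsdef]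
    simp only [List.drop_one, List.tail_cons, List.mem_append, List.mem_replicate]
    have hne : v.val ≠ u.val := fun h => huv (Fin.ext h).symm
    rw [hnbrL_mem u v]
    constructor
    · rintro (h | h)
      · exact h
      · exact (hne h.2).elim
    · intro h; exact Or.inl h
  have hhead_low : ∀ v, ¬ e ≤ G.degree v → (ℓ v).headD true = false := by
    intro v hv; rw [hldef]; simp [hv]
  have hhead_high : ∀ v, e ≤ G.degree v → (ℓ v).headD true = true := by
    intro v hv; rw [hldef]; simp [hv]
  have hbm_get : ∀ u v : Fin n, e ≤ G.degree u → e ≤ G.degree v → rank v < rank u →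
      ((ℓ u).drop (1 + k)).getD (rank v) false = decide (G.Adj u v) := by
    intro u v hu hv hrlt
    have h1 : (ℓ u).drop (1 + k) = bm u := by
      rw [hldef]
      simp only [hu, if_pos]
      have : (true :: (bitsOfNat k u.val ++ bm u)).drop (1 + k)
          = (bitsOfNat k u.val ++ bm u).drop k := by
        rw [Nat.add_comm, List.drop_succ_cons]
      rw [this]
      exact List.drop_left' (length_bitsOfNat k u.val)
    rw [h1, hbmdef]
    have hlen : ((List.range (rank u)).map
        (fun j => decide (G.Adj u (hlist.getD j u)))).length = rank u := by simp
    rw [List.getD_eq_getElem _ _ (by rw [hlen]; exact hrlt)]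
    simp only [List.getElem_map, List.getElem_range]
    congr 1
    rw [hrank_get v hv u]
  -- finish
  refine ⟨ℓ, ?_, ?_⟩
  · intro v
    by_cases hv : e ≤ G.degree v
    · rw [hlen_high v hv]
      have h1 : (rank v : ℝ) + 1 ≤ (H.card : ℝ) := by
        exact_mod_cast hrank_lt v hv
      push_cast
      linarith
    · rw [hlen_low v hv]
      push_cast
      linarith
  · intro u v huv
    by_cases hu : e ≤ G.degree u <;> by_cases hv : e ≤ G.degree v
    · -- both high
      have hru : rank u ≠ rank v := fun h => huv (hrank_inj u v hu hv h)
      rw [decoder, if_neg (by rw [hhead_high u hu]; simp),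
        if_neg (by rw [hhead_high v hv]; simp)]
      rw [hlen_high u hu, hlen_high v hv]
      by_cases hlt : rank v < rank u
      · rw [if_pos (by omega)]
        have : 1 + (k + rank v) - 1 - k = rank v := by omega
        rw [this, hbm_get u v hu hv hlt]
        simp
      · have hlt' : rank u < rank v := by omega
        rw [if_neg (by omega)]
        have : 1 + (k + rank u) - 1 - k = rank u := by omega
        rw [this, hbm_get v u hv hu hlt']
        simp [G.adj_comm]
    · -- u high, v low
      rw [decoder, if_neg (by rw [hhead_high u hu]; simp),
        if_pos (hhead_low v hv)]
      rw [hid u, decide_eq_true_iff]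
      rw [hmem v u (Ne.symm huv) hv]
      exact G.adj_comm v u
    · -- u low
      rw [decoder, if_pos (hhead_low u hu)]
      rw [hid v, decide_eq_true_iff]
      exact hmem u v huv hu
    · -- both low
      rw [decoder, if_pos (hhead_low u hu)]
      rw [hid v, decide_eq_true_iff]
      exact hmem u v huv hu
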